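/- Let H₁ ≤ H₂ ≤ … ≤ H_s be positive reals, λ_k > 0, and r_k ≥ 0 satisfy λ_{k+1} H_k r_{k+1} ≥ 1/33 where r_{k+1} = ‖z_{k+1} - ẑ_k‖, and suppose ∑_{k=1}^s r_{k+1}² ≤ 12 R² for some R > 0. Then ∑_{k=1}^s λ_{k+1} ≥ s^{3/2} / (66√3 · H_s · R). -/

import Mathlib

theorem stepsize_sum_lower_bound
    (s : ℕ) (hs : 1 ≤ s) (H lam r : ℕ → ℝ) (R : ℝ) (hR : 0 < R)
    (hHpos : ∀ k, 0 < H k) (hHmono : ∀ k ∈ Finset.Icc 1 s, H k ≤ H s)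
    (hlam : ∀ k, 0 < lam k) (hr : ∀ k, 0 ≤ r k)
    (hlb : ∀ k ∈ Finset.Icc 1 s, (1:ℝ)/33 ≤ lam (k+1) * (H k * r (k+1)))
    (hsum : ∑ k ∈ Finset.Icc 1 s, (r (k+1))^2 ≤ 12 * R^2) :
    (s:ℝ) ^ ((3:ℝ)/2) / (66 * Real.sqrt 3 * H s * R) ≤ ∑ k ∈ Finset.Icc 1 s, lam (k+1) := by
  set C : ℝ := 66 * Real.sqrt 3 * H s * R with hC
  have hs3 : (0:ℝ) < Real.sqrt 3 := Real.sqrt_pos.mpr (by norm_num)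
  have hHs := hHpos s
  have hCpos : 0 < C := by positivity
  set A : ℝ := ∑ k ∈ Finset.Icc 1 s, lam (k+1) with hA
  set B : ℝ := ∑ k ∈ Finset.Icc 1 s, (lam (k+1))⁻¹ ^ 2 with hB
  have hApos : 0 < A := by
    refine Finset.sum_pos (fun k _ => hlam _) ?_
    exact ⟨1, Finset.mem_Icc.mpr ⟨le_refl 1, hs⟩⟩
  have hBnonneg : 0 ≤ B := Finset.sum_nonneg fun k _ => by positivity
  -- pointwise bound: (lam (k+1))⁻¹ ≤ 33 * H s * r (k+1)
  have hBle : B ≤ C ^ 2 := by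
    have h1 : B ≤ ∑ k ∈ Finset.Icc 1 s, (33 * H s)^2 * (r (k+1))^2 := by
      refine Finset.sum_le_sum fun k hk => ?_
      have hlbk := hlb k hk
      have hHk := hHmono k hk
      have hrk := hr (k+1)
      have hlk := hlam (k+1)
      have h2 : (1:ℝ)/33 ≤ lam (k+1) * (H s * r (k+1)) := by
        refine hlbk.trans ?_
        have : H k * r (k+1) ≤ H s * r (k+1) := mul_le_mul_of_nonneg_right hHk hrk
        exact mul_le_mul_of_nonneg_left this hlk.le
      have hinv : (lam (k+1))⁻¹ ≤ 33 * (H s * r (k+1)) := by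
        rw [inv_le_iff_one_le_mul₀ hlk]
        calc (1:ℝ) = 33 * (1/33) := by norm_num
          _ ≤ 33 * (lam (k+1) * (H s * r (k+1))) := by
              exact mul_le_mul_of_nonneg_left h2 (by norm_num)
          _ = 33 * (H s * r (k+1)) * lam (k+1) := by ring
      have hnn : 0 ≤ (lam (k+1))⁻¹ := by positivity
      calc (lam (k+1))⁻¹ ^ 2 ≤ (33 * (H s * r (k+1)))^2 := by
            exact pow_le_pow_left₀ hnn hinv 2
        _ = (33 * H s)^2 * (r (k+1))^2 := by ring
    calc B ≤ (33 * H s)^2 * ∑ k ∈ Finset.Icc 1 s, (r (k+1))^2 := by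
          rw [← Finset.mul_sum] at h1; exact h1
      _ ≤ (33 * H s)^2 * (12 * R^2) := by
          exact mul_le_mul_of_nonneg_left hsum (by positivity)
      _ = C ^ 2 := by
          rw [hC]
          have : Real.sqrt 3 ^ 2 = 3 := Real.sq_sqrt (by norm_num)
          nlinarith [this]
  -- Hölder inequality with p = 3, q = 3/2
  have holder : (s:ℝ) ≤ B ^ ((1:ℝ)/3) * A ^ ((2:ℝ)/3) := by
    have hpq : Real.HolderConjugate 3 (3/2) := by
      constructor <;> norm_num
    have := Real.inner_le_Lp_mul_Lq (Finset.Icc 1 s)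
      (fun k => (lam (k+1)) ^ (-(2:ℝ)/3)) (fun k => (lam (k+1)) ^ ((2:ℝ)/3)) hpq
    have heq1 : ∀ k ∈ Finset.Icc 1 s,
        (lam (k+1)) ^ (-(2:ℝ)/3) * (lam (k+1)) ^ ((2:ℝ)/3) = 1 := by
      intro k _
      rw [← Real.rpow_add (hlam (k+1))]
      norm_num
    have heq2 : ∀ k ∈ Finset.Icc 1 s,
        |(lam (k+1)) ^ (-(2:ℝ)/3)| ^ (3:ℝ) = (lam (k+1))⁻¹ ^ 2 := by
      intro k _
      rw [abs_of_nonneg (Real.rpow_nonneg (hlam (k+1)).le _),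
        ← Real.rpow_natCast ((lam (k+1))⁻¹) 2, ← Real.rpow_neg_one (lam (k+1)),
        ← Real.rpow_mul (hlam (k+1)).le, ← Real.rpow_mul (hlam (k+1)).le]
      norm_num
    have heq3 : ∀ k ∈ Finset.Icc 1 s,
        |(lam (k+1)) ^ ((2:ℝ)/3)| ^ ((3:ℝ)/2) = lam (k+1) := by
      intro k _
      rw [abs_of_nonneg (Real.rpow_nonneg (hlam (k+1)).le _),
        ← Real.rpow_mul (hlam (k+1)).le]
      norm_num
    rw [Finset.sum_congr rfl heq1, Finset.sum_congr rfl heq2,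
      Finset.sum_congr rfl heq3, Finset.sum_const, nsmul_eq_mul, mul_one,
      Nat.card_Icc] at this
    rw [show s+1-1 = s by omega,
      show 1/((3:ℝ)/2) = (2:ℝ)/3 by norm_num, ← hA, ← hB] at this
    exact this
  -- conclude
  rw [div_le_iff₀ hCpos]
  have hfinal : (s:ℝ) ^ ((3:ℝ)/2) ≤ B ^ ((1:ℝ)/2) * A := by
    have h1 : (s:ℝ) ^ ((3:ℝ)/2) ≤ (B ^ ((1:ℝ)/3) * A ^ ((2:ℝ)/3)) ^ ((3:ℝ)/2) :=
      Real.rpow_le_rpow (Nat.cast_nonneg s) holder (by norm_num)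
    refine h1.trans_eq ?_
    rw [Real.mul_rpow (Real.rpow_nonneg hBnonneg _) (Real.rpow_nonneg hApos.le _),
      ← Real.rpow_mul hBnonneg, ← Real.rpow_mul hApos.le]
    norm_num
  refine hfinal.trans ?_
  have hBsq : B ^ ((1:ℝ)/2) ≤ C := by
    rw [← Real.sqrt_eq_rpow]
    calc Real.sqrt B ≤ Real.sqrt (C^2) := Real.sqrt_le_sqrt hBle
      _ = C := Real.sqrt_sq hCpos.le
  calc B ^ ((1:ℝ)/2) * A ≤ C * A := mul_le_mul_of_nonneg_right hBsq hApos.le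
    _ = A * C := mul_comm _ _
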